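/- For any polynomial p(η) = Σ_{k=0}^{n} a_k η^k, define I[p](η) = Σ_{k=0}^{n+1} b_k η^k by b_0 = 0 and the downward recursion b_{k+1} = (1/g'_k^{(0)})(a_k - Σ_{j=k+1}^{n} g'_j^{(j-k)} b_{j+1}) for k = n, n-1, ..., 0, where g'_j^{(m)} = 0 for m odd and g'_j^{(m)} = (-1)^{m/2} 2^{-m} C(j+1, m+1) for m even. Then the polynomial P = I[p] satisfies (P̌(x - i/2) - P̌(x + i/2)) / (η(x - i/2) - η(x + i/2)) = p̌(x), where P̌(x) = P(x), p̌(x) = p(x), and η(x) = x, γ = 1. -/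

import Mathlib

open Finset

/-- `g'_j^{(m)} = θ(m even) (-1)^{m/2} 2^{-m} C(j+1, m+1)`. -/
noncomputable def gcoef (j m : ℕ) : ℂ :=
  if Even m then (-1) ^ (m / 2) * (2 : ℂ) ^ (-(m : ℤ)) * ((j + 1).choose (m + 1) : ℂ) else 0

lemma gcoef_zero (k : ℕ) : gcoef k 0 = (k + 1 : ℂ) := by
  simp [gcoef]

lemma diffpow (m : ℕ) : (-(Complex.I/2))^(m+1) - (Complex.I/2)^(m+1)
    = -Complex.I * (if Even m then ((-1:ℂ))^(m/2) * (2:ℂ)^(-(m:ℤ)) else 0) := by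
  rcases Nat.even_or_odd m with ⟨t, rfl⟩ | ⟨t, rfl⟩
  · have h2 : (t + t) / 2 = t := by omega
    have hI : (Complex.I/2)^(t+t+1) = (-1:ℂ)^t * Complex.I / 2^(t+t+1) := by
      rw [div_pow, pow_succ, ← two_mul, pow_mul, Complex.I_sq]
    have hneg : (-(Complex.I/2))^(t+t+1) = -((Complex.I/2)^(t+t+1)) := by
      rw [Odd.neg_pow ⟨t, by ring⟩]
    rw [if_pos ⟨t, rfl⟩, h2, hneg, hI]
    rw [zpow_neg, zpow_natCast]
    have : ((2:ℂ)^(t+t))⁻¹ = 1/2^(t+t) := by rw [one_div]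
    rw [this]
    field_simp
    ring
  · have he : Even (2*t+1+1) := ⟨t+1, by ring⟩
    rw [Even.neg_pow he, if_neg (by simp [Nat.even_add_one, parity_simps])]
    ring

lemma keyf (j : ℕ) (x : ℂ) :
    (x - Complex.I/2)^(j+1) - (x + Complex.I/2)^(j+1)
      = -Complex.I * ∑ k ∈ range (j+1), gcoef j (j-k) * x^k := by
  have h1 : x - Complex.I/2 = x + (-(Complex.I/2)) := by ring
  rw [h1, add_pow, add_pow, ← Finset.sum_sub_distrib, Finset.sum_range_succ, Finset.mul_sum]
  simp only [Nat.sub_self, pow_zero, Nat.choose_self, Nat.cast_one, mul_one, sub_self, add_zero]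
  refine Finset.sum_congr rfl ?_
  intro k hk
  have hkj : k ≤ j := Nat.lt_succ_iff.mp (Finset.mem_range.mp hk)
  have hm : j + 1 - k = (j - k) + 1 := by omega
  have hc : (j+1).choose k = (j+1).choose ((j-k)+1) := by
    rw [show (j-k)+1 = (j+1) - k by omega, Nat.choose_symm (by omega : k ≤ j+1)]
  rw [hm, hc]
  have hd := diffpow (j - k)
  have lhs_eq : x ^ k * (-(Complex.I / 2)) ^ ((j-k)+1) * (((j+1).choose ((j-k)+1)):ℂ)
      - x ^ k * (Complex.I / 2) ^ ((j-k)+1) * (((j+1).choose ((j-k)+1)):ℂ)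
      = ((-(Complex.I/2))^((j-k)+1) - (Complex.I/2)^((j-k)+1))
        * (x^k * (((j+1).choose ((j-k)+1)):ℂ)) := by ring
  rw [lhs_eq, hd]
  unfold gcoef
  by_cases hE : Even (j-k)
  · simp only [if_pos hE]
    ring
  · simp only [if_neg hE]
    ring

lemma swap_sum (n : ℕ) (F : ℕ → ℕ → ℂ) :
    ∑ j ∈ range (n+1), ∑ k ∈ range (j+1), F j k
      = ∑ k ∈ range (n+1), ∑ j ∈ Finset.Icc k n, F j k := by
  have h1 : ∀ j ∈ range (n+1), ∑ k ∈ range (j+1), F j k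
      = ∑ k ∈ range (n+1), if k ≤ j then F j k else 0 := by
    intro j hj
    rw [← Finset.sum_filter]
    congr 1
    ext m
    simp only [Finset.mem_filter, Finset.mem_range] at *
    omega
  rw [Finset.sum_congr rfl h1, Finset.sum_comm]
  refine Finset.sum_congr rfl ?_
  intro k hk
  rw [← Finset.sum_filter]
  congr 1
  ext m
  simp only [Finset.mem_filter, Finset.mem_range, Finset.mem_Icc] at *
  omega

/-- If `P = I[p]` is defined from `p(η) = Σ_{k≤n} a_k η^k` by `b_0 = 0` and the downward
recursion `b_{k+1} = (1/g'_k^{(0)})(a_k - Σ_{j=k+1}^n g'_j^{(j-k)} b_{j+1})`, then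
`(P̌(x-i/2) - P̌(x+i/2)) / (η(x-i/2) - η(x+i/2)) = p̌(x)` where `η(x) = x`, `γ = 1`. -/
theorem map_I_difference_property (n : ℕ) (a b : ℕ → ℂ)
    (hb0 : b 0 = 0)
    (hb : ∀ k ≤ n, b (k + 1) =
      (1 / gcoef k 0) * (a k - ∑ j ∈ Finset.Icc (k + 1) n, gcoef j (j - k) * b (j + 1)))
    (x : ℂ) :
    ((∑ k ∈ Finset.range (n + 2), b k * (x - Complex.I / 2) ^ k)
        - ∑ k ∈ Finset.range (n + 2), b k * (x + Complex.I / 2) ^ k) /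
        ((x - Complex.I / 2) - (x + Complex.I / 2)) =
      ∑ k ∈ Finset.range (n + 1), a k * x ^ k := by
  have hrec : ∀ k ≤ n, ∑ j ∈ Finset.Icc k n, gcoef j (j-k) * b (j+1) = a k := by
    intro k hk
    have hsplit : Finset.Icc k n = insert k (Finset.Icc (k+1) n) := by
      ext m
      simp only [Finset.mem_Icc, Finset.mem_insert]
      omega
    rw [hsplit, Finset.sum_insert (by simp [Finset.mem_Icc]), Nat.sub_self, hb k hk, gcoef_zero]
    have hne : ((k:ℂ)+1) ≠ 0 := Nat.cast_add_one_ne_zero k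
    field_simp
    ring
  have hden : (x - Complex.I/2) - (x + Complex.I/2) = -Complex.I := by ring
  rw [hden, ← Finset.sum_sub_distrib]
  simp only [← mul_sub]
  rw [Finset.sum_range_succ']
  simp only [hb0, sub_self, mul_zero, zero_mul, add_zero]
  have hkey : ∀ j ∈ range (n+1), b (j+1) * ((x - Complex.I/2)^(j+1) - (x + Complex.I/2)^(j+1))
      = -Complex.I * ∑ k ∈ range (j+1), b (j+1) * gcoef j (j-k) * x^k := by
    intro j hj
    rw [keyf]
    simp only [Finset.mul_sum]
    apply Finset.sum_congr rfl
    intro k hk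
    ring
  rw [Finset.sum_congr rfl hkey, ← Finset.mul_sum,
    mul_div_cancel_left₀ _ (neg_ne_zero.mpr Complex.I_ne_zero),
    swap_sum]
  refine Finset.sum_congr rfl fun k hk => ?_
  have hkn : k ≤ n := Nat.lt_succ_iff.mp (Finset.mem_range.mp hk)
  calc ∑ j ∈ Finset.Icc k n, b (j+1) * gcoef j (j-k) * x^k
      = (∑ j ∈ Finset.Icc k n, gcoef j (j-k) * b (j+1)) * x^k := by
        rw [Finset.sum_mul]
        exact Finset.sum_congr rfl fun j hj => by ring
    _ = a k * x^k := by rw [hrec k hkn]
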